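/- arXiv:2307.14610 — 2 statements merged into one kernel-verified Lean document; each statement's English description precedes it below -/
import Mathlib

section
/- Let G be a finite connected weighted graph with more than one vertex, ψ ∈ ℓ²(G) with Ψ(φ₀) = ⟨ψ, φ₀⟩ ≠ 0. Then for every f ∈ ℓ²(G) and every ε > 0: ‖f‖² ≤ (1+ε) · (‖ψ‖² / (λ₁ |Ψ(φ₀)|²)) · ‖∇f‖² + ((1+ε)/ε) · |⟨ψ, f⟩|² / |Ψ(φ₀)|². -/
open Finset
open Matrix

/-- Weighted gradient norm squared: `‖∇f‖² = (1/2) Σ_{u,v} |f(u)−f(v)|² w(u,v)`. -/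
noncomputable def gradSq {V : Type*} [Fintype V] (w : V → V → ℝ) (f : V → ℂ) : ℝ :=
  (1 / 2) * ∑ u, ∑ v, ‖f u - f v‖ ^ 2 * w u v

/-- Weighted graph Laplacian: `(Lf)(v) = Σ_u (f(v) − f(u)) w(v,u)`. -/
noncomputable def lap {V : Type*} [Fintype V] (w : V → V → ℝ) (f : V → ℂ) : V → ℂ :=
  fun v => ∑ u, (f v - f u) * ((w v u : ℝ) : ℂ)

/-- Inner product on `ℓ²(G)`. -/
noncomputable def ip {V : Type*} [Fintype V] (ψ f : V → ℂ) : ℂ :=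
  ∑ v, (starRingEnd ℂ) (ψ v) * f v

/-- Squared `ℓ²(G)` norm. -/
noncomputable def nsq {V : Type*} [Fintype V] (f : V → ℂ) : ℝ :=
  ∑ v, ‖f v‖ ^ 2

/-- The graph with weight `w` is connected. -/
def GraphConnected {V : Type*} [Fintype V] (w : V → V → ℝ) : Prop :=
  ∀ u v : V, Relation.ReflTransGen (fun a b => 0 < w a b) u v

/-- `lam1` is the first (smallest) nonzero eigenvalue of the Laplacian of `(V, w)`. -/
def IsFirstNonzeroEig {V : Type*} [Fintype V] (w : V → V → ℝ) (lam1 : ℝ) : Prop :=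
  0 < lam1 ∧
  (∃ φ : V → ℂ, φ ≠ 0 ∧ lap w φ = fun v => (lam1 : ℂ) * φ v) ∧
  ∀ (μ : ℝ) (φ : V → ℂ), φ ≠ 0 → (lap w φ = fun v => (μ : ℂ) * φ v) → μ = 0 ∨ lam1 ≤ μ

lemma ip_lap_eq {V : Type*} [Fintype V] (w : V → V → ℝ)
    (hsymm : ∀ u v, w u v = w v u) (f : V → ℂ) :
    ip f (lap w f) = ((gradSq w f : ℝ) : ℂ) := by
  have h1 : ip f (lap w f) = ∑ v, ∑ u, (starRingEnd ℂ) (f v) * (f v - f u) * ((w v u : ℝ) : ℂ) := by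
    simp only [ip, lap, Finset.mul_sum]
    exact Finset.sum_congr rfl fun v _ => Finset.sum_congr rfl fun u _ => by ring
  have h2 : ip f (lap w f) = ∑ v, ∑ u, (starRingEnd ℂ) (f u) * (f u - f v) * ((w v u : ℝ) : ℂ) := by
    rw [h1, Finset.sum_comm]
    exact Finset.sum_congr rfl fun v _ => Finset.sum_congr rfl fun u _ => by rw [hsymm u v]
  have key : (2 : ℂ) * ip f (lap w f)
      = ∑ v, ∑ u, ((‖f v - f u‖ ^ 2 : ℝ) : ℂ) * ((w v u : ℝ) : ℂ) := by
    calc (2 : ℂ) * ip f (lap w f)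
        = (∑ v, ∑ u, (starRingEnd ℂ) (f v) * (f v - f u) * ((w v u : ℝ) : ℂ))
          + ∑ v, ∑ u, (starRingEnd ℂ) (f u) * (f u - f v) * ((w v u : ℝ) : ℂ) := by
          rw [← h1, ← h2]; ring
      _ = ∑ v, ∑ u, ((starRingEnd ℂ) (f v - f u) * (f v - f u)) * ((w v u : ℝ) : ℂ) := by
          simp only [← Finset.sum_add_distrib]
          refine Finset.sum_congr rfl fun v _ => Finset.sum_congr rfl fun u _ => ?_
          simp only [map_sub]
          ring
      _ = _ := by
          refine Finset.sum_congr rfl fun v _ => Finset.sum_congr rfl fun u _ => ?_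
          rw [Complex.conj_mul']; norm_cast
  have : ip f (lap w f) = (1/2 : ℂ) * ∑ v, ∑ u, ((‖f v - f u‖ ^ 2 : ℝ) : ℂ) * ((w v u : ℝ) : ℂ) := by
    rw [← key]; ring
  rw [this, gradSq]
  push_cast
  ring

lemma const_of_gradSq_zero {V : Type*} [Fintype V] (w : V → V → ℝ)
    (hnn : ∀ u v, 0 ≤ w u v)
    (hconn : ∀ u v : V, Relation.ReflTransGen (fun a b => 0 < w a b) u v)
    (f : V → ℂ) (h : gradSq w f = 0) : ∀ u v, f u = f v := by
  have hterm : ∀ u v, 0 < w u v → f u = f v := by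
    have hz : ∑ u, ∑ v, ‖f u - f v‖ ^ 2 * w u v = 0 := by
      have := h
      rw [gradSq] at this
      linarith
    intro u v hw
    have hnn2 : ∀ p ∈ (Finset.univ : Finset V), 0 ≤ ∑ v, ‖f p - f v‖ ^ 2 * w p v :=
      fun p _ => Finset.sum_nonneg fun q _ => mul_nonneg (by positivity) (hnn p q)
    have h1 := (Finset.sum_eq_zero_iff_of_nonneg hnn2).1 hz u (Finset.mem_univ u)
    have hnn3 : ∀ q ∈ (Finset.univ : Finset V), 0 ≤ ‖f u - f q‖ ^ 2 * w u q :=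
      fun q _ => mul_nonneg (by positivity) (hnn u q)
    have h2 := (Finset.sum_eq_zero_iff_of_nonneg hnn3).1 h1 v (Finset.mem_univ v)
    have hsq : ‖f u - f v‖ ^ 2 = 0 := by
      rcases mul_eq_zero.1 h2 with h | h
      · exact h
      · exact absurd h (ne_of_gt hw)
    have h5 : ‖f u - f v‖ = 0 := by nlinarith [norm_nonneg (f u - f v)]
    exact sub_eq_zero.mp (norm_eq_zero.mp h5)
  intro u v
  induction hconn u v with
  | refl => rfl
  | tail _ hedge ih => exact ih.trans (hterm _ _ hedge)

noncomputable def lapMat {V : Type*} [Fintype V] [DecidableEq V] (w : V → V → ℝ) :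
    Matrix V V ℂ :=
  Matrix.of fun v u => ((if v = u then ∑ x, w v x else -(w v u) : ℝ) : ℂ)

lemma lapMat_mulVec {V : Type*} [Fintype V] [DecidableEq V] (w : V → V → ℝ)
    (hdiag : ∀ v, w v v = 0) (f : V → ℂ) :
    lapMat w *ᵥ f = lap w f := by
  funext v
  simp only [Matrix.mulVec, dotProduct, lapMat, Matrix.of_apply, lap]
  rw [Finset.sum_eq_add_sum_sdiff_singleton_of_mem (Finset.mem_univ v)
      (fun u => ((if v = u then ∑ x, w v x else -(w v u) : ℝ) : ℂ) * f u),
    Finset.sum_eq_add_sum_sdiff_singleton_of_mem (Finset.mem_univ v) (fun u => (f v - f u) * ((w v u : ℝ) : ℂ))]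
  have : ∀ u ∈ Finset.univ \ {v}, ((if v = u then ∑ x, w v x else -(w v u) : ℝ) : ℂ) * f u
      = (f v - f u) * ((w v u : ℝ) : ℂ) - f v * ((w v u : ℝ) : ℂ) := by
    intro u hu
    rw [if_neg (by simpa [eq_comm] using (Finset.mem_sdiff.1 hu).2)]
    push_cast
    ring
  rw [Finset.sum_congr rfl this, Finset.sum_sub_distrib]
  have hsum : ∑ u ∈ Finset.univ \ {v}, f v * ((w v u : ℝ) : ℂ) = ∑ x, f v * ((w v x : ℝ) : ℂ) := by
    rw [Finset.sum_subset (Finset.sdiff_subset)]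
    intro x _ hx
    have : x = v := by simpa [Finset.mem_sdiff] using hx
    simp [this, hdiag]
  rw [hsum]
  rw [if_pos rfl, hdiag]
  push_cast
  rw [Finset.sum_mul]
  have e2 : ∀ x ∈ (Finset.univ : Finset V), ((w v x : ℝ) : ℂ) * f v = f v * ((w v x : ℝ) : ℂ) :=
    fun x _ => by ring
  rw [Finset.sum_congr rfl e2]
  ring

lemma lapMat_isHermitian {V : Type*} [Fintype V] [DecidableEq V] (w : V → V → ℝ)
    (hsymm : ∀ u v, w u v = w v u) : (lapMat w).IsHermitian := by
  ext v u
  simp only [Matrix.conjTranspose_apply, lapMat, Matrix.of_apply, Complex.star_def, Complex.conj_ofReal]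
  by_cases h : u = v
  · subst h; simp
  · rw [if_neg h, if_neg (fun hh => h hh.symm), hsymm]

lemma poincare {V : Type*} [Fintype V] [DecidableEq V] [Nonempty V] (w : V → V → ℝ)
    (hsymm : ∀ u v, w u v = w v u) (hnn : ∀ u v, 0 ≤ w u v) (hdiag : ∀ v, w v v = 0)
    (hconn : GraphConnected w) (lam1 : ℝ) (hlam : IsFirstNonzeroEig w lam1)
    (g : V → ℂ) (hg : ∑ v, g v = 0) : lam1 * nsq g ≤ gradSq w g := by
  have hA := lapMat_isHermitian w hsymm
  set b := hA.eigenvectorBasis with hb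
  set μ := hA.eigenvalues with hμ
  let x : EuclideanSpace ℂ V := WithLp.toLp 2 g
  set c : V → ℂ := fun i => inner (𝕜 := ℂ) (b i) x with hc
  -- norm identity
  have hnsq : nsq g = ∑ i, ‖c i‖ ^ 2 := by
    have h1 : ‖x‖ ^ 2 = ∑ i, ‖b.repr x i‖ ^ 2 := by
      rw [← b.repr.norm_map x, EuclideanSpace.norm_eq, Real.sq_sqrt (by positivity)]
    have h2 : ‖x‖ ^ 2 = nsq g := by
      rw [EuclideanSpace.norm_eq, Real.sq_sqrt (by positivity), nsq]
      try rfl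
    rw [← h2, h1]
    refine Finset.sum_congr rfl fun i _ => ?_
    rw [b.repr_apply_apply]
  -- operator
  set L : EuclideanSpace ℂ V →ₗ[ℂ] EuclideanSpace ℂ V := Matrix.toEuclideanLin (lapMat w) with hL
  have hLb : ∀ i, L (b i) = ((μ i : ℝ) : ℂ) • b i := by
    intro i
    have h := hA.mulVec_eigenvectorBasis i
    ext v
    have hv := congrFun h v
    simp only [Pi.smul_apply] at hv
    show (lapMat w *ᵥ ⇑(b i)) v = ((μ i : ℝ) : ℂ) • (b i v)
    rw [hv, Complex.real_smul]
    try rw [Complex.real_smul]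
    try rfl
  have hLx : ∀ v, L x v = lap w g v := fun v => congrFun (lapMat_mulVec w hdiag g) v
  have hexp : x = ∑ i, c i • b i := (b.sum_repr' x).symm
  have hLsum : L x = ∑ i, (c i * ((μ i : ℝ) : ℂ)) • b i := by
    conv_lhs => rw [hexp]
    rw [map_sum]
    refine Finset.sum_congr rfl fun i _ => ?_
    rw [_root_.map_smul, hLb, smul_smul]
  have hip : ip g (lap w g) = inner (𝕜 := ℂ) x (L x) := by
    rw [ip]
    simp only [PiLp.inner_apply, RCLike.inner_apply']
    exact Finset.sum_congr rfl fun v _ => by rw [hLx v]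
  have hinner : inner (𝕜 := ℂ) x (L x) = ∑ i, (c i * ((μ i : ℝ) : ℂ)) * (starRingEnd ℂ) (c i) := by
    rw [hLsum, inner_sum]
    refine Finset.sum_congr rfl fun i _ => ?_
    rw [inner_smul_right]
    congr 1
    rw [← inner_conj_symm, hc]
  have hquad : gradSq w g = ∑ i, μ i * ‖c i‖ ^ 2 := by
    have h1 : ((gradSq w g : ℝ) : ℂ) = ∑ i, ((μ i * ‖c i‖ ^ 2 : ℝ) : ℂ) := by
      rw [← ip_lap_eq w hsymm g, hip, hinner]
      refine Finset.sum_congr rfl fun i _ => ?_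
      have : c i * (starRingEnd ℂ) (c i) = ((‖c i‖ ^ 2 : ℝ) : ℂ) := by
        rw [Complex.mul_conj']
        norm_cast
      push_cast
      calc c i * ((μ i : ℝ) : ℂ) * (starRingEnd ℂ) (c i)
          = ((μ i : ℝ) : ℂ) * (c i * (starRingEnd ℂ) (c i)) := by ring
        _ = ((μ i : ℝ) : ℂ) * ((‖c i‖ ^ 2 : ℝ) : ℂ) := by rw [this]
        _ = _ := by push_cast; ring
    exact_mod_cast h1
  -- per-eigenvalue bound
  have hbound : ∀ i, lam1 * ‖c i‖ ^ 2 ≤ μ i * ‖c i‖ ^ 2 := by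
    intro i
    have hne : (fun v => b i v : V → ℂ) ≠ (0 : V → ℂ) := by
      intro h
      apply b.orthonormal.ne_zero i
      ext v
      exact congrFun h v
    have heig : lap w (fun v => b i v) = fun v => ((μ i : ℝ) : ℂ) * b i v := by
      have h1 : lap w (fun v => b i v) = lap w ⇑(b i) := rfl
      rw [h1, ← lapMat_mulVec w hdiag, hA.mulVec_eigenvectorBasis]
      funext v
      simp only [Pi.smul_apply]
      rw [Complex.real_smul]
    rcases hlam.2.2 (μ i) (fun v => b i v) hne heig with h0 | hge
    · -- zero eigenvalue: b i is constant, so c i = 0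
      have hlz : lap w (fun v => b i v) = 0 := by
        rw [heig, h0]
        funext v; simp
      have hgz : gradSq w (fun v => b i v) = 0 := by
        have h2 := ip_lap_eq w hsymm (fun v => b i v)
        rw [hlz] at h2
        simp only [ip, Pi.zero_apply, mul_zero, Finset.sum_const_zero] at h2
        exact_mod_cast h2.symm
      have hconst := const_of_gradSq_zero w hnn hconn (fun v => b i v) hgz
      obtain ⟨v0⟩ := (inferInstance : Nonempty V)
      have hci : c i = 0 := by
        rw [hc]
        simp only [PiLp.inner_apply, RCLike.inner_apply']
        have h3 : ∀ v, (starRingEnd ℂ) (b i v) * x v = (starRingEnd ℂ) (b i v0) * g v := by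
          intro v
          have h4 : b i v = b i v0 := hconst v v0
          show (starRingEnd ℂ) (b i v) * g v = _
          rw [h4]
        rw [Finset.sum_congr rfl fun v _ => h3 v, ← Finset.mul_sum, hg, mul_zero]
      rw [hci]
      simp
    · exact mul_le_mul_of_nonneg_right hge (by positivity)
  calc lam1 * nsq g = ∑ i, lam1 * ‖c i‖ ^ 2 := by rw [hnsq, Finset.mul_sum]
    _ ≤ ∑ i, μ i * ‖c i‖ ^ 2 := Finset.sum_le_sum fun i _ => hbound i
    _ = gradSq w g := hquad.symm

section Helpers
variable {V : Type*} [Fintype V]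

lemma ip_conj (a b : V → ℂ) : (starRingEnd ℂ) (ip a b) = ip b a := by
  rw [ip, map_sum, ip]
  exact Finset.sum_congr rfl fun v _ => by
    simp only [_root_.map_mul, Complex.conj_conj]; ring

lemma ip_sub_right (a b c : V → ℂ) :
    ip a (fun v => b v - c v) = ip a b - ip a c := by
  simp [ip, mul_sub, Finset.sum_sub_distrib]

lemma ip_smul_right (a b : V → ℂ) (z : ℂ) :
    ip a (fun v => z * b v) = z * ip a b := by
  rw [ip, ip, Finset.mul_sum]
  exact Finset.sum_congr rfl fun v _ => by ring

lemma nsq_nonneg (a : V → ℂ) : 0 ≤ nsq a :=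
  Finset.sum_nonneg fun v _ => by positivity

lemma nsq_add (a b : V → ℂ) :
    nsq (fun v => a v + b v) = nsq a + nsq b + 2 * (ip a b).re := by
  have hterm : ∀ v, ‖a v + b v‖ ^ 2
      = ‖a v‖ ^ 2 + ‖b v‖ ^ 2 + 2 * ((starRingEnd ℂ) (a v) * b v).re := by
    intro v
    have h := norm_add_sq (𝕜 := ℂ) (a v) (b v)
    simp only [RCLike.inner_apply', RCLike.re_to_complex] at h
    linarith
  rw [nsq, Finset.sum_congr rfl fun v _ => hterm v, Finset.sum_add_distrib,
    Finset.sum_add_distrib, ip, Complex.re_sum, ← Finset.mul_sum]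
  rfl

lemma nsq_smul (a : V → ℂ) (z : ℂ) :
    nsq (fun v => z * a v) = ‖z‖ ^ 2 * nsq a := by
  simp [nsq, norm_mul, mul_pow, Finset.mul_sum]

lemma ip_cs (a b : V → ℂ) : ‖ip a b‖ ^ 2 ≤ nsq a * nsq b := by
  let x : EuclideanSpace ℂ V := WithLp.toLp 2 a
  let y : EuclideanSpace ℂ V := WithLp.toLp 2 b
  have h1 : ip a b = inner (𝕜 := ℂ) x y := by
    rw [ip]
    simp only [PiLp.inner_apply, RCLike.inner_apply']
    rfl
  have h2 : nsq a = ‖x‖ ^ 2 := by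
    rw [EuclideanSpace.norm_eq, Real.sq_sqrt (by positivity), nsq]
  have h3 : nsq b = ‖y‖ ^ 2 := by
    rw [EuclideanSpace.norm_eq, Real.sq_sqrt (by positivity), nsq]
  have h := norm_inner_le_norm (𝕜 := ℂ) x y
  rw [h1, h2, h3]
  calc ‖inner (𝕜 := ℂ) x y‖ ^ 2 ≤ (‖x‖ * ‖y‖) ^ 2 :=
        pow_le_pow_left₀ (norm_nonneg _) h 2
    _ = _ := by ring

end Helpers

/-- Theorem 3.4: if `Ψ(φ₀) = ⟨ψ, φ₀⟩ ≠ 0` then for every `f ∈ ℓ²(G)` and every `ε > 0`,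
`‖f‖² ≤ (1+ε)(‖ψ‖²/(λ₁|Ψ(φ₀)|²))‖∇f‖² + ((1+ε)/ε)|⟨ψ,f⟩|²/|Ψ(φ₀)|²`. -/
theorem stmt4 {V : Type*} [Fintype V] (w : V → V → ℝ)
    (hsymm : ∀ u v, w u v = w v u) (hnn : ∀ u v, 0 ≤ w u v) (hdiag : ∀ v, w v v = 0)
    (hconn : GraphConnected w) (hcard : 1 < Fintype.card V)
    (lam1 : ℝ) (hlam : IsFirstNonzeroEig w lam1)
    (φ0 : V → ℂ) (hφ0 : φ0 = fun _ => ((1 / Real.sqrt (Fintype.card V) : ℝ) : ℂ))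
    (ψ : V → ℂ) (hnz : ip ψ φ0 ≠ 0)
    (f : V → ℂ) (ε : ℝ) (hε : 0 < ε) :
    nsq f ≤ (1 + ε) * (nsq ψ / (lam1 * ‖ip ψ φ0‖ ^ 2)) * gradSq w f +
      ((1 + ε) / ε) * (‖ip ψ f‖ ^ 2 / ‖ip ψ φ0‖ ^ 2) := by
  classical
  have hNE : Nonempty V := Fintype.card_pos_iff.mp (by omega)
  have hnpos : (0 : ℝ) < (Fintype.card V : ℝ) := by
    have : 0 < Fintype.card V := by omega
    exact_mod_cast this
  set r : ℝ := 1 / Real.sqrt (Fintype.card V) with hr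
  have hrpos : 0 < r := by
    rw [hr]; positivity
  have hr2 : (Fintype.card V : ℝ) * r ^ 2 = 1 := by
    rw [hr, div_pow, one_pow, Real.sq_sqrt hnpos.le]
    field_simp
  have hφv : ∀ v, φ0 v = ((r : ℝ) : ℂ) := fun v => by rw [hφ0]
  have hφnsq : nsq φ0 = 1 := by
    rw [nsq]
    have : ∀ v : V, ‖φ0 v‖ ^ 2 = r ^ 2 := by
      intro v
      rw [hφv v, Complex.norm_real, Real.norm_eq_abs, abs_of_pos hrpos]
    rw [Finset.sum_congr rfl fun v _ => this v, Finset.sum_const, Finset.card_univ,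
      nsmul_eq_mul, hr2]
  have hφip : ip φ0 φ0 = 1 := by
    rw [ip]
    have : ∀ v : V, (starRingEnd ℂ) (φ0 v) * φ0 v = ((r ^ 2 : ℝ) : ℂ) := by
      intro v
      rw [hφv v, Complex.conj_ofReal]
      push_cast; ring
    rw [Finset.sum_congr rfl fun v _ => this v, Finset.sum_const, Finset.card_univ,
      nsmul_eq_mul]
    push_cast
    exact_mod_cast congrArg (fun t : ℝ => (t : ℂ)) hr2
  -- decomposition
  set c : ℂ := ip φ0 f with hcdef
  set g : V → ℂ := fun v => f v - c * φ0 v with hgdef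
  have hipφg : ip φ0 g = 0 := by
    rw [hgdef, ip_sub_right, ip_smul_right, hφip, ← hcdef]
    ring
  have hsumg : ∑ v, g v = 0 := by
    have h1 : ip φ0 g = ((r : ℝ) : ℂ) * ∑ v, g v := by
      rw [ip, Finset.mul_sum]
      exact Finset.sum_congr rfl fun v _ => by rw [hφv v, Complex.conj_ofReal]
    rw [h1] at hipφg
    rcases mul_eq_zero.1 hipφg with h | h
    · exact absurd h (by exact_mod_cast hrpos.ne')
    · exact h
  have hipgφ : ip g φ0 = 0 := by
    rw [← ip_conj, hipφg, map_zero]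
  -- Pythagoras
  have hPyth : nsq f = ‖c‖ ^ 2 + nsq g := by
    have hfeq : f = fun v => g v + c * φ0 v := by
      funext v; rw [hgdef]; ring
    rw [hfeq, nsq_add g (fun v => c * φ0 v), nsq_smul, hφnsq, ip_smul_right, hipgφ]
    simp
    ring
  -- gradient equality
  have hgrad : gradSq w g = gradSq w f := by
    rw [gradSq, gradSq]
    congr 1
    refine Finset.sum_congr rfl fun u _ => Finset.sum_congr rfl fun v _ => ?_
    have : g u - g v = f u - f v := by
      rw [hgdef]
      simp only [hφv]
      ring
    rw [this]
  -- Poincare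
  have hpoin : lam1 * nsq g ≤ gradSq w f := by
    rw [← hgrad]
    exact poincare w hsymm hnn hdiag hconn lam1 hlam g hsumg
  -- psi decomposition
  set a : ℂ := ip φ0 ψ with hadef
  have haconj : ip ψ φ0 = (starRingEnd ℂ) a := by rw [hadef, ip_conj]
  set ψp : V → ℂ := fun v => ψ v - a * φ0 v with hψp
  have hipψpg : ip ψp g = ip ψ g := by
    have h1 : ip ψp g = ip ψ g - ip (fun v => a * φ0 v) g := by
      rw [hψp, ip]
      rw [show ∑ v, (starRingEnd ℂ) (ψ v - a * φ0 v) * g v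
          = ∑ v, ((starRingEnd ℂ) (ψ v) * g v - (starRingEnd ℂ) (a * φ0 v) * g v) from
        Finset.sum_congr rfl fun v _ => by rw [map_sub]; ring]
      rw [Finset.sum_sub_distrib]
      rfl
    have h2 : ip (fun v => a * φ0 v) g = (starRingEnd ℂ) a * ip φ0 g := by
      rw [ip, ip, Finset.mul_sum]
      exact Finset.sum_congr rfl fun v _ => by rw [_root_.map_mul]; ring
    rw [h1, h2, hipφg, mul_zero, sub_zero]
  have hψpnsq : nsq ψp = nsq ψ - ‖a‖ ^ 2 := by
    have hfeq : ψp = fun v => ψ v + (-(a * φ0 v)) := by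
      funext v; rw [hψp]; ring
    have h2 : ip ψ (fun v => -(a * φ0 v)) = -(a * (starRingEnd ℂ) a) := by
      have h3 : ip ψ (fun v => (-a) * φ0 v) = (-a) * ip ψ φ0 := ip_smul_right ψ φ0 (-a)
      have h4 : (fun v => -(a * φ0 v)) = fun v => (-a) * φ0 v := by funext v; ring
      rw [h4, h3, haconj]
      ring
    have h5 : nsq (fun v => -(a * φ0 v)) = ‖a‖ ^ 2 := by
      have h6 : (fun v => -(a * φ0 v)) = fun v => (-a) * φ0 v := by funext v; ring
      rw [h6, nsq_smul, hφnsq, norm_neg, mul_one]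
    rw [hfeq, nsq_add, h5, h2]
    have h7 : (a * (starRingEnd ℂ) a) = ((‖a‖ ^ 2 : ℝ) : ℂ) := by
      rw [Complex.mul_conj']
      norm_cast
    rw [show (-(a * (starRingEnd ℂ) a)).re = -‖a‖ ^ 2 by
      rw [h7, ← Complex.ofReal_neg, Complex.ofReal_re]]
    ring
  -- Cauchy-Schwarz bounds
  have hcs1 : ‖ip ψ g‖ ^ 2 ≤ (nsq ψ - ‖a‖ ^ 2) * nsq g := by
    rw [← hipψpg, ← hψpnsq]
    exact ip_cs ψp g
  have hcs2 : ‖ip ψ φ0‖ ^ 2 ≤ nsq ψ := by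
    have := ip_cs ψ φ0
    rw [hφnsq, mul_one] at this
    exact this
  have hanorm : ‖a‖ = ‖ip ψ φ0‖ := by
    rw [haconj, RCLike.norm_conj]
  -- triangle inequality
  have hdecomp : ip ψ f = c * ip ψ φ0 + ip ψ g := by
    have hfeq : f = fun v => (c * φ0 v) + g v := by
      funext v; rw [hgdef]; ring
    have h1 : ip ψ f = ip ψ (fun v => c * φ0 v) + ip ψ g := by
      conv_lhs => rw [hfeq]
      rw [ip, ip, ip, ← Finset.sum_add_distrib]
      exact Finset.sum_congr rfl fun v _ => by ring
    rw [h1, ip_smul_right]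
  have htri : ‖c‖ * ‖ip ψ φ0‖ ≤ ‖ip ψ f‖ + ‖ip ψ g‖ := by
    have h1 : c * ip ψ φ0 = ip ψ f - ip ψ g := by rw [hdecomp]; ring
    calc ‖c‖ * ‖ip ψ φ0‖ = ‖c * ip ψ φ0‖ := (norm_mul _ _).symm
      _ = ‖ip ψ f - ip ψ g‖ := by rw [h1]
      _ ≤ ‖ip ψ f‖ + ‖ip ψ g‖ := norm_sub_le _ _
  -- final arithmetic
  set A : ℝ := ‖ip ψ f‖ with hA
  set B : ℝ := ‖ip ψ g‖ with hB
  set C : ℝ := ‖c‖ with hC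
  set Q : ℝ := ‖ip ψ φ0‖ with hQ
  set K : ℝ := nsq ψ with hK
  set S : ℝ := nsq g with hS
  set Gq : ℝ := gradSq w f with hGq
  have hQpos : 0 < Q := norm_pos_iff.mpr hnz
  have hApos : 0 ≤ A := norm_nonneg _
  have hBpos : 0 ≤ B := norm_nonneg _
  have hCpos : 0 ≤ C := norm_nonneg _
  have hSpos : 0 ≤ S := nsq_nonneg g
  have hlampos : 0 < lam1 := hlam.1
  have hB2 : B ^ 2 ≤ (K - Q ^ 2) * S := by
    rw [hanorm] at hcs1
    exact hcs1
  have h1 : C ^ 2 * Q ^ 2 * ε ≤ (1 + ε) * A ^ 2 + (1 + ε) * B ^ 2 * ε := by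
    nlinarith [sq_nonneg (A - ε * B), mul_nonneg (sub_nonneg.mpr htri)
      (by positivity : (0:ℝ) ≤ A + B + C * Q), hε.le]
  have hgoal : nsq f * (lam1 * Q ^ 2 * ε)
      ≤ ((1 + ε) * (K / (lam1 * Q ^ 2)) * Gq + ((1 + ε) / ε) * (A ^ 2 / Q ^ 2))
        * (lam1 * Q ^ 2 * ε) := by
    have hrhs : ((1 + ε) * (K / (lam1 * Q ^ 2)) * Gq + ((1 + ε) / ε) * (A ^ 2 / Q ^ 2))
        * (lam1 * Q ^ 2 * ε) = (1 + ε) * K * Gq * ε + (1 + ε) * A ^ 2 * lam1 := by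
      field_simp
    rw [hrhs, hPyth]
    have hKQ : Q ^ 2 ≤ K := hcs2
    have hGqS : lam1 * S ≤ Gq := hpoin
    have hK0 : (0:ℝ) ≤ K := nsq_nonneg ψ
    have t1 : lam1 * (C ^ 2 * Q ^ 2 * ε) ≤ lam1 * ((1 + ε) * A ^ 2 + (1 + ε) * B ^ 2 * ε) :=
      mul_le_mul_of_nonneg_left h1 hlampos.le
    have t2 : lam1 * (1 + ε) * ε * B ^ 2 ≤ lam1 * (1 + ε) * ε * ((K - Q ^ 2) * S) :=
      mul_le_mul_of_nonneg_left hB2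
        (mul_nonneg (mul_nonneg hlampos.le (by linarith : (0:ℝ) ≤ 1 + ε)) hε.le)
    have t3 : (1 + ε) * K * ε * (lam1 * S) ≤ (1 + ε) * K * ε * Gq :=
      mul_le_mul_of_nonneg_left hGqS
        (mul_nonneg (mul_nonneg (by linarith : (0:ℝ) ≤ 1 + ε) hK0) hε.le)
    have t4 : (0:ℝ) ≤ lam1 * S * Q ^ 2 * ε ^ 2 :=
      mul_nonneg (mul_nonneg (mul_nonneg hlampos.le hSpos) (sq_nonneg Q)) (sq_nonneg ε)
    linarith [t1, t2, t3, t4]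
  exact le_of_mul_le_mul_right hgoal (mul_pos (mul_pos hlampos (pow_pos hQpos 2)) hε)
end

section
/- Let G be a finite connected weighted graph with disjoint cover {S_j}_{j∈J} by connected induced subgraphs each having more than one vertex. For each j let ψ_j ∈ ℓ²(G) be supported in S_j with ⟨ψ_j, φ_{0,j}⟩ ≠ 0, where φ_{0,j} = χ_{S_j}/√|S_j|, and set ζ_j = ψ_j / (√|S_j| ⟨ψ_j, φ_{0,j}⟩) and Θ_j = ‖ψ_j‖² / (λ_{1,j} |⟨ψ_j, φ_{0,j}⟩|²), Θ_Ξ = max_j Θ_j. Then for every f ∈ ℓ²(G): Σ_{j∈J} Σ_{v∈S_j} |f(v) − ⟨ζ_j, f⟩|² ≤ Θ_Ξ ‖∇f‖²_{ℓ²(G)}. -/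
open Finset

/-- Gradient norm squared of the induced subgraph on the vertex set `S`. -/
noncomputable def gradSqOn {V : Type*} [Fintype V] (w : V → V → ℝ) (S : Finset V)
    (f : V → ℂ) : ℝ :=
  (1 / 2) * ∑ u ∈ S, ∑ v ∈ S, ‖f u - f v‖ ^ 2 * w u v

/-- Laplacian of the induced subgraph on the vertex set `S`. -/
noncomputable def lapOn {V : Type*} [Fintype V] (w : V → V → ℝ) (S : Finset V)
    (f : V → ℂ) : V → ℂ :=
  fun v => ∑ u ∈ S, (f v - f u) * ((w v u : ℝ) : ℂ)

/-- The induced subgraph on `S` is connected. -/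
def GraphConnectedOn {V : Type*} [Fintype V] (w : V → V → ℝ) (S : Finset V) : Prop :=
  ∀ u ∈ S, ∀ v ∈ S, Relation.ReflTransGen (fun a b => a ∈ S ∧ b ∈ S ∧ 0 < w a b) u v

/-- `lam1` is the first nonzero eigenvalue of the Laplacian of the induced subgraph on `S`. -/
def IsFirstNonzeroEigOn {V : Type*} [Fintype V] (w : V → V → ℝ) (S : Finset V)
    (lam1 : ℝ) : Prop :=
  0 < lam1 ∧
  (∃ φ : V → ℂ, (∀ v ∉ S, φ v = 0) ∧ φ ≠ 0 ∧
      ∀ v ∈ S, lapOn w S φ v = (lam1 : ℂ) * φ v) ∧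
  ∀ (μ : ℝ) (φ : V → ℂ), (∀ v ∉ S, φ v = 0) → φ ≠ 0 →
    (∀ v ∈ S, lapOn w S φ v = (μ : ℂ) * φ v) → μ = 0 ∨ lam1 ≤ μ

section Stmt8Aux
variable {V : Type*} [Fintype V] [DecidableEq V]

set_option linter.unusedSectionVars false

noncomputable def lapT (w : V → V → ℝ) (S : Finset V) :
    EuclideanSpace ℂ {x // x ∈ S} →ₗ[ℂ] EuclideanSpace ℂ {x // x ∈ S} where
  toFun x := WithLp.toLp 2 (fun v => ∑ u : {x // x ∈ S}, (x v - x u) * ((w v u : ℝ) : ℂ))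
  map_add' x y := by
    ext v
    simp only [PiLp.add_apply, PiLp.toLp_apply]
    rw [← Finset.sum_add_distrib]
    congr 1; funext u; ring
  map_smul' c x := by
    ext v
    simp only [PiLp.smul_apply, PiLp.toLp_apply, smul_eq_mul, RingHom.id_apply]
    rw [Finset.mul_sum]
    congr 1; funext u; ring

lemma lapT_isSymmetric (w : V → V → ℝ) (S : Finset V) (hsymm : ∀ u v, w u v = w v u) :
    (lapT w S).IsSymmetric := by
  intro x y
  simp only [lapT, LinearMap.coe_mk, AddHom.coe_mk, PiLp.inner_apply, RCLike.inner_apply']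
  have L : ∀ v : {x // x ∈ S}, (starRingEnd ℂ) (∑ u : {x // x ∈ S}, (x v - x u) * ((w v u : ℝ) : ℂ)) * y v
      = ∑ u : {x // x ∈ S}, ((starRingEnd ℂ) (x v) * y v - (starRingEnd ℂ) (x u) * y v) * ((w v u : ℝ) : ℂ) := by
    intro v
    rw [map_sum, Finset.sum_mul]
    congr 1; funext u
    simp only [map_mul, map_sub, Complex.conj_ofReal]
    ring
  have R : ∀ v : {x // x ∈ S}, (starRingEnd ℂ) (x v) * ∑ u : {x // x ∈ S}, (y v - y u) * ((w v u : ℝ) : ℂ)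
      = ∑ u : {x // x ∈ S}, ((starRingEnd ℂ) (x v) * y v - (starRingEnd ℂ) (x v) * y u) * ((w v u : ℝ) : ℂ) := by
    intro v
    rw [Finset.mul_sum]
    congr 1; funext u; ring
  rw [Finset.sum_congr rfl (fun v _ => L v), Finset.sum_congr rfl (fun v _ => R v)]
  simp only [sub_mul, Finset.sum_sub_distrib]
  congr 1
  rw [Finset.sum_comm]
  congr 1; funext v; congr 1; funext u
  rw [hsymm u v]

lemma inner_lapT (w : V → V → ℝ) (S : Finset V) (hsymm : ∀ u v, w u v = w v u)
    (x : EuclideanSpace ℂ {x // x ∈ S}) :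
    (inner ℂ x (lapT w S x) : ℂ) =
      (((1/2) * ∑ u : {x // x ∈ S}, ∑ v : {x // x ∈ S}, ‖x u - x v‖ ^ 2 * w u v : ℝ) : ℂ) := by
  simp only [lapT, LinearMap.coe_mk, AddHom.coe_mk, PiLp.inner_apply, RCLike.inner_apply']
  have key : ∀ a b : ℂ, (starRingEnd ℂ) a * (a - b) + (starRingEnd ℂ) b * (b - a)
      = ((‖a - b‖ ^ 2 : ℝ) : ℂ) := by
    intro a b
    have : ((‖a - b‖ ^ 2 : ℝ) : ℂ) = (starRingEnd ℂ) (a - b) * (a - b) := by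
      rw [Complex.conj_mul']
      norm_cast
    rw [this]; simp only [map_sub]; ring
  have A : (∑ v : {x // x ∈ S}, (starRingEnd ℂ) (x v) * ∑ u : {x // x ∈ S}, (x v - x u) * ((w v u : ℝ) : ℂ))
      = ∑ u : {x // x ∈ S}, ∑ v : {x // x ∈ S}, (starRingEnd ℂ) (x u) * (x u - x v) * ((w u v : ℝ) : ℂ) := by
    congr 1; funext v; rw [Finset.mul_sum]; congr 1; funext u; ring
  rw [A]
  have D2 : (∑ u : {x // x ∈ S}, ∑ v : {x // x ∈ S}, (starRingEnd ℂ) (x u) * (x u - x v) * ((w u v : ℝ) : ℂ))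
      = ∑ u : {x // x ∈ S}, ∑ v : {x // x ∈ S}, (starRingEnd ℂ) (x v) * (x v - x u) * ((w v u : ℝ) : ℂ) :=
    Finset.sum_comm
  have two : (2 : ℂ) * (∑ u : {x // x ∈ S}, ∑ v : {x // x ∈ S}, (starRingEnd ℂ) (x u) * (x u - x v) * ((w u v : ℝ) : ℂ))
      = ∑ u : {x // x ∈ S}, ∑ v : {x // x ∈ S}, ((‖x u - x v‖ ^ 2 : ℝ) : ℂ) * ((w u v : ℝ) : ℂ) := by
    rw [two_mul]
    nth_rewrite 2 [D2]
    rw [← Finset.sum_add_distrib]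
    congr 1; funext u
    rw [← Finset.sum_add_distrib]
    congr 1; funext v
    rw [hsymm (v : V) u, ← key (x u) (x v)]
    ring
  have h2 : (∑ u : {x // x ∈ S}, ∑ v : {x // x ∈ S}, (starRingEnd ℂ) (x u) * (x u - x v) * ((w u v : ℝ) : ℂ))
      = (1/2 : ℂ) * ∑ u : {x // x ∈ S}, ∑ v : {x // x ∈ S}, ((‖x u - x v‖ ^ 2 : ℝ) : ℂ) * ((w u v : ℝ) : ℂ) := by
    rw [← two]; ring
  rw [h2]
  push_cast
  norm_num

lemma conj_mul_self (z : ℂ) : (starRingEnd ℂ) z * z = ((‖z‖ ^ 2 : ℝ) : ℂ) := by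
  rw [Complex.conj_mul']; norm_cast

lemma spectral_gap (w : V → V → ℝ) (S : Finset V)
    (hsymm : ∀ u v, w u v = w v u) (hnn : ∀ u v, 0 ≤ w u v)
    (hconnS : GraphConnectedOn w S) (hS : S.Nonempty)
    (lam1 : ℝ) (hlam : IsFirstNonzeroEigOn w S lam1)
    (h : V → ℂ) (hmean : ∑ v ∈ S, h v = 0) :
    lam1 * ∑ v ∈ S, ‖h v‖ ^ 2 ≤ gradSqOn w S h := by
  classical
  have hsym := lapT_isSymmetric w S hsymm
  have hn : Module.finrank ℂ (EuclideanSpace ℂ {x // x ∈ S}) = Fintype.card {x // x ∈ S} :=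
    finrank_euclideanSpace
  set b := hsym.eigenvectorBasis hn with hb
  set μ := hsym.eigenvalues hn with hμ
  have heig : ∀ i, lapT w S (b i) = (μ i : ℂ) • b i := fun i => hsym.apply_eigenvectorBasis hn i
  -- Fact A: every eigenvalue is 0 or ≥ lam1
  have factA : ∀ i, μ i = 0 ∨ lam1 ≤ μ i := by
    intro i
    set φ : V → ℂ := fun v => if hv : v ∈ S then b i ⟨v, hv⟩ else 0 with hφdef
    have hφres : ∀ p : {x // x ∈ S}, φ ↑p = b i p := by
      intro p; simp only [hφdef, dif_pos p.2]
    have hsuppφ : ∀ v ∉ S, φ v = 0 := fun v hv => dif_neg hv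
    have hφne : φ ≠ 0 := by
      intro hzero
      apply b.toBasis.ne_zero i
      rw [OrthonormalBasis.coe_toBasis]
      ext p
      have := congrFun hzero (p : V)
      rw [hφres p] at this
      exact this
    have heq : ∀ v ∈ S, lapOn w S φ v = (μ i : ℂ) * φ v := by
      intro v hv
      have h1 : lapOn w S φ v = ∑ u : {x // x ∈ S}, (φ v - φ ↑u) * ((w v ↑u : ℝ) : ℂ) :=
        (Finset.sum_coe_sort S _).symm
      have h2 : (∑ u : {x // x ∈ S}, (φ v - φ ↑u) * ((w v ↑u : ℝ) : ℂ))
          = lapT w S (b i) ⟨v, hv⟩ := by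
        simp only [lapT, LinearMap.coe_mk, AddHom.coe_mk]
        congr 1; funext u
        rw [hφres u]
        congr 2
        exact (hφres ⟨v, hv⟩)
      rw [h1, h2, heig i]
      rw [PiLp.smul_apply, smul_eq_mul, hφres ⟨v, hv⟩]
    exact hlam.2.2 (μ i) φ hsuppφ hφne heq
  -- Fact C: eigenvalue 0 implies constant eigenvector on S
  have factC : ∀ i, μ i = 0 → ∀ p q : {x // x ∈ S}, b i p = b i q := by
    intro i hi p q
    have hT0 : lapT w S (b i) = 0 := by rw [heig i, hi]; simp
    have hq0 : (inner ℂ (b i) (lapT w S (b i)) : ℂ) = 0 := by rw [hT0, inner_zero_right]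
    rw [inner_lapT w S hsymm] at hq0
    have hq' : (1/2 : ℝ) * ∑ u : {x // x ∈ S}, ∑ v : {x // x ∈ S}, ‖b i u - b i v‖ ^ 2 * w ↑u ↑v = 0 := by
      exact_mod_cast hq0
    have hnn2 : ∀ u v : {x // x ∈ S}, 0 ≤ ‖b i u - b i v‖ ^ 2 * w ↑u ↑v :=
      fun u v => mul_nonneg (sq_nonneg _) (hnn _ _)
    have hsum0 : ∑ u : {x // x ∈ S}, ∑ v : {x // x ∈ S}, ‖b i u - b i v‖ ^ 2 * w ↑u ↑v = 0 := by
      linarith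
    have hterm : ∀ u v : {x // x ∈ S}, ‖b i u - b i v‖ ^ 2 * w ↑u ↑v = 0 := by
      intro u v
      have h1 := (Finset.sum_eq_zero_iff_of_nonneg
        (fun u _ => Finset.sum_nonneg fun v _ => hnn2 u v)).1 hsum0 u (Finset.mem_univ u)
      exact (Finset.sum_eq_zero_iff_of_nonneg (fun v _ => hnn2 u v)).1 h1 v (Finset.mem_univ v)
    have step : ∀ p q : {x // x ∈ S}, 0 < w ↑p ↑q → b i p = b i q := by
      intro p q hw
      have := hterm p q
      have h0 : ‖b i p - b i q‖ ^ 2 = 0 := by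
        rcases mul_eq_zero.1 this with h1 | h1
        · exact h1
        · linarith
      have h0' : ‖b i p - b i q‖ = 0 := by
        have := sq_eq_zero_iff.1 h0
        exact this
      rwa [norm_eq_zero, sub_eq_zero] at h0'
    have chain := hconnS ↑p p.2 ↑q q.2
    have main : ∀ y, Relation.ReflTransGen (fun a b => a ∈ S ∧ b ∈ S ∧ 0 < w a b) ↑p y →
        ∀ (hy : y ∈ S), b i p = b i ⟨y, hy⟩ := by
      intro y hgen
      induction hgen with
      | refl => intro hy; exact congrArg (b i) (Subtype.ext rfl)
      | @tail c d _ hstep ih =>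
        intro hd
        obtain ⟨hcS, hdS, hw⟩ := hstep
        exact (ih hcS).trans (step ⟨c, hcS⟩ ⟨d, hdS⟩ hw)
    have := main ↑q chain q.2
    rwa [show (⟨↑q, q.2⟩ : {x // x ∈ S}) = q from Subtype.ext rfl] at this
  -- main computation
  set x : EuclideanSpace ℂ {x // x ∈ S} := WithLp.toLp 2 (fun v => h ↑v) with hx
  set c : Fin (Fintype.card {x // x ∈ S}) → ℂ := fun i => inner ℂ (b i) x with hc
  -- norm identity
  have hxx : (inner ℂ x x : ℂ) = ((∑ v ∈ S, ‖h v‖ ^ 2 : ℝ) : ℂ) := by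
    simp only [PiLp.inner_apply, RCLike.inner_apply']
    rw [← Finset.sum_coe_sort S (fun v => ‖h v‖ ^ 2)]
    push_cast
    congr 1; funext v
    simp only [hx]
    exact_mod_cast conj_mul_self (h ↑v)
  have hexp : (inner ℂ x x : ℂ) = ∑ i, ((‖c i‖ ^ 2 : ℝ) : ℂ) := by
    rw [← b.sum_inner_mul_inner x x]
    congr 1; funext i
    rw [← inner_conj_symm x (b i)]
    exact conj_mul_self (c i)
  have hTx : (inner ℂ x (lapT w S x) : ℂ) = ∑ i, ((μ i * ‖c i‖ ^ 2 : ℝ) : ℂ) := by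
    rw [← b.sum_inner_mul_inner x (lapT w S x)]
    congr 1; funext i
    have h1 : (inner ℂ (b i) (lapT w S x) : ℂ) = (μ i : ℂ) * c i := by
      rw [← hsym (b i) x, heig i, inner_smul_left, Complex.conj_ofReal]
    have h2 : (inner ℂ x (b i) : ℂ) = (starRingEnd ℂ) (c i) := by
      rw [hc, inner_conj_symm]
    rw [h1, h2]
    have h3 : (starRingEnd ℂ) (c i) * ((μ i : ℂ) * c i) = (μ i : ℂ) * ((starRingEnd ℂ) (c i) * c i) := by
      ring
    rw [h3, conj_mul_self]
    push_cast
    ring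
  have hgrad : (inner ℂ x (lapT w S x) : ℂ) = ((gradSqOn w S h : ℝ) : ℂ) := by
    rw [inner_lapT w S hsymm]
    congr 1
    unfold gradSqOn
    congr 1
    rw [← Finset.sum_coe_sort S (fun u => ∑ v ∈ S, ‖h u - h v‖ ^ 2 * w u v)]
    congr 1; funext u
    rw [← Finset.sum_coe_sort S (fun v => ‖h ↑u - h v‖ ^ 2 * w ↑u v)]
  -- real identities
  have hreal1 : (∑ v ∈ S, ‖h v‖ ^ 2 : ℝ) = ∑ i, ‖c i‖ ^ 2 := by
    have := hxx.symm.trans hexp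
    push_cast at this
    exact_mod_cast this
  have hreal2 : gradSqOn w S h = ∑ i, μ i * ‖c i‖ ^ 2 := by
    have := hgrad.symm.trans hTx
    push_cast at this
    exact_mod_cast this
  -- zero eigenvalue components vanish
  have hczero : ∀ i, μ i = 0 → c i = 0 := by
    intro i hi
    obtain ⟨v0, hv0⟩ := hS
    have hconst := factC i hi
    have : c i = (starRingEnd ℂ) (b i ⟨v0, hv0⟩) * ∑ v : {x // x ∈ S}, h ↑v := by
      rw [hc]
      simp only [PiLp.inner_apply, RCLike.inner_apply']
      rw [Finset.mul_sum]
      congr 1; funext v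
      rw [hconst v ⟨v0, hv0⟩]
    rw [this, Finset.sum_coe_sort S (fun v => h v), hmean, mul_zero]
  -- conclude
  rw [hreal1, hreal2, Finset.mul_sum]
  apply Finset.sum_le_sum
  intro i _
  rcases factA i with h0 | hge
  · rw [hczero i h0, h0]; simp
  · exact mul_le_mul_of_nonneg_right hge (sq_nonneg _)

lemma norm_add_sq_c (a b : ℂ) : ‖a + b‖ ^ 2 = ‖a‖ ^ 2 + 2 * (a * (starRingEnd ℂ) b).re + ‖b‖ ^ 2 := by
  rw [Complex.sq_norm, Complex.sq_norm, Complex.sq_norm, Complex.normSq_add]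
  ring

lemma norm_sub_sq_c (a b : ℂ) : ‖a - b‖ ^ 2 = ‖a‖ ^ 2 - 2 * (a * (starRingEnd ℂ) b).re + ‖b‖ ^ 2 := by
  have := norm_add_sq_c a (-b)
  simp only [map_neg, mul_neg, Complex.neg_re] at this
  rw [← sub_eq_add_neg] at this
  rw [this, norm_neg]; ring

set_option maxHeartbeats 1000000 in
lemma local_poincare (w : V → V → ℝ) (S : Finset V)
    (hsymm : ∀ u v, w u v = w v u) (hnn : ∀ u v, 0 ≤ w u v)
    (hconnS : GraphConnectedOn w S) (hcard : 1 < S.card)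
    (ψ : V → ℂ) (hsuppψ : ∀ v ∉ S, ψ v = 0)
    (φ0 : V → ℂ)
    (hφ0 : φ0 = fun v => if v ∈ S then ((1 / Real.sqrt (S.card) : ℝ) : ℂ) else 0)
    (hnz : ip ψ φ0 ≠ 0) (lam1 : ℝ) (hlam : IsFirstNonzeroEigOn w S lam1)
    (f : V → ℂ) :
    ∑ v ∈ S, ‖f v - ip ψ f / ((Real.sqrt ((S.card : ℕ)) : ℂ) * ip ψ φ0)‖ ^ 2 ≤
      (nsq ψ / (lam1 * ‖ip ψ φ0‖ ^ 2)) * gradSqOn w S f := by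
  classical
  have hSne : S.Nonempty := Finset.card_pos.1 (by omega)
  set n : ℝ := (S.card : ℝ) with hndef
  have hn0 : 0 < n := by
    have h1 : 0 < S.card := lt_trans Nat.zero_lt_one hcard
    rw [hndef]
    exact_mod_cast h1
  set s : ℝ := Real.sqrt n with hsdef
  have hs0 : 0 < s := Real.sqrt_pos.2 hn0
  have hs2 : s ^ 2 = n := Real.sq_sqrt hn0.le
  have hlam1 : 0 < lam1 := hlam.1
  -- restriction of ip to S
  have hres : ∀ g : V → ℂ, ip ψ g = ∑ v ∈ S, (starRingEnd ℂ) (ψ v) * g v := by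
    intro g
    exact (Finset.sum_subset (Finset.subset_univ S)
      (fun v _ hv => by rw [hsuppψ v hv]; simp)).symm
  set P : ℂ := ∑ v ∈ S, (starRingEnd ℂ) (ψ v) with hPdef
  have hipφ : ip ψ φ0 = P / ((s : ℝ) : ℂ) := by
    rw [hres φ0]
    simp only [hφ0]
    rw [Finset.sum_congr rfl (fun v hv => by rw [if_pos hv] :
      ∀ v ∈ S, (starRingEnd ℂ) (ψ v) * (if v ∈ S then ((1 / Real.sqrt (S.card) : ℝ) : ℂ) else 0)
        = (starRingEnd ℂ) (ψ v) * ((1 / s : ℝ) : ℂ))]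
    rw [← Finset.sum_mul]
    push_cast
    rw [← hPdef]
    ring
  have hsC : ((s : ℝ) : ℂ) ≠ 0 := by
    exact_mod_cast hs0.ne'
  have hP : P ≠ 0 := by
    intro h0
    apply hnz
    rw [hipφ, h0, zero_div]
  set p2 : ℝ := ‖P‖ ^ 2 with hp2def
  have hp2 : 0 < p2 := by
    rw [hp2def]
    exact pow_pos (norm_pos_iff.2 hP) 2
  have hnormφ : ‖ip ψ φ0‖ ^ 2 = p2 / n := by
    have hss : ‖((s : ℝ) : ℂ)‖ = s := by
      rw [Complex.norm_real, Real.norm_eq_abs, abs_of_nonneg hs0.le]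
    rw [hipφ, norm_div, div_pow, hss, hs2, hp2def]
  have hden : ((s : ℝ) : ℂ) * ip ψ φ0 = P := by
    rw [hipφ, mul_div_cancel₀ _ hsC]
  -- the centered function h
  set m : ℂ := (∑ v ∈ S, f v) / ((n : ℝ) : ℂ) with hmdef
  set h : V → ℂ := fun v => if v ∈ S then f v - m else 0 with hhdef
  have hnC : ((n : ℝ) : ℂ) ≠ 0 := by exact_mod_cast hn0.ne'
  have hmean : ∑ v ∈ S, h v = 0 := by
    have e1 : ∑ v ∈ S, h v = ∑ v ∈ S, (f v - m) :=
      Finset.sum_congr rfl (fun v hv => by simp only [hhdef, if_pos hv])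
    rw [e1, Finset.sum_sub_distrib, Finset.sum_const, nsmul_eq_mul, hmdef]
    have : ((S.card : ℕ) : ℂ) = ((n : ℝ) : ℂ) := by push_cast [hndef]; ring
    rw [this, mul_div_cancel₀ _ hnC, sub_self]
  set c : ℂ := ip ψ f / (((s : ℝ) : ℂ) * ip ψ φ0) with hcdef
  set A : ℝ := ∑ v ∈ S, ‖h v‖ ^ 2 with hAdef
  set B : ℝ := ∑ v ∈ S, ‖ψ v‖ ^ 2 with hBdef
  have hA : 0 ≤ A := Finset.sum_nonneg fun _ _ => sq_nonneg _
  have hB : 0 ≤ B := Finset.sum_nonneg fun _ _ => sq_nonneg _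
  -- key 1 : LHS decomposition
  have key1 : ∑ v ∈ S, ‖f v - c‖ ^ 2 = A + n * ‖m - c‖ ^ 2 := by
    have e1 : ∀ v ∈ S, ‖f v - c‖ ^ 2
        = ‖h v‖ ^ 2 + 2 * (h v * (starRingEnd ℂ) (m - c)).re + ‖m - c‖ ^ 2 := by
      intro v hv
      have : f v - c = h v + (m - c) := by
        simp only [hhdef, if_pos hv]; ring
      rw [this, norm_add_sq_c]
    rw [Finset.sum_congr rfl e1, Finset.sum_add_distrib, Finset.sum_add_distrib,
      Finset.sum_const, nsmul_eq_mul]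
    have e2 : ∑ v ∈ S, 2 * (h v * (starRingEnd ℂ) (m - c)).re
        = 2 * ((∑ v ∈ S, h v) * (starRingEnd ℂ) (m - c)).re := by
      rw [Finset.sum_mul, Complex.re_sum, Finset.mul_sum]
    rw [e2, hmean]
    simp only [zero_mul, Complex.zero_re, mul_zero, add_zero]
    rfl
  -- key 2 : P * (c - m) = Q
  set Q : ℂ := ∑ v ∈ S, (starRingEnd ℂ) (ψ v) * h v with hQdef
  have key2 : P * (c - m) = Q := by
    have hc' : c = ip ψ f / P := by rw [hcdef, hden]
    have hQ' : Q = ip ψ f - P * m := by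
      rw [hQdef, hres f]
      have : ∀ v ∈ S, (starRingEnd ℂ) (ψ v) * h v
          = (starRingEnd ℂ) (ψ v) * f v - (starRingEnd ℂ) (ψ v) * m := by
        intro v hv; simp only [hhdef, if_pos hv]; ring
      rw [Finset.sum_congr rfl this, Finset.sum_sub_distrib, ← Finset.sum_mul, ← hPdef]
    rw [hQ', hc', mul_sub, mul_div_cancel₀ _ hP]
  have hmc : ‖m - c‖ ^ 2 = ‖Q‖ ^ 2 / p2 := by
    rw [← key2, norm_mul, mul_pow, ← hp2def, norm_sub_rev]
    field_simp [hp2.ne']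
  -- key 3 : refined Cauchy-Schwarz
  set t : ℂ := P / ((n : ℝ) : ℂ) with htdef
  have hconjP : (starRingEnd ℂ) P = ∑ v ∈ S, ψ v := by
    rw [hPdef, map_sum]
    simp
  have hsub : ∑ v ∈ S, ‖ψ v - (starRingEnd ℂ) t‖ ^ 2 = B - p2 / n := by
    have e1 : ∀ v ∈ S, ‖ψ v - (starRingEnd ℂ) t‖ ^ 2
        = ‖ψ v‖ ^ 2 - 2 * (ψ v * t).re + ‖t‖ ^ 2 := by
      intro v _
      rw [norm_sub_sq_c, Complex.conj_conj, RCLike.norm_conj]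
    rw [Finset.sum_congr rfl e1, Finset.sum_add_distrib, Finset.sum_sub_distrib,
      Finset.sum_const, nsmul_eq_mul, ← hBdef]
    have e2 : ∑ v ∈ S, 2 * (ψ v * t).re = 2 * (((starRingEnd ℂ) P) * t).re := by
      rw [hconjP, Finset.sum_mul, Complex.re_sum, Finset.mul_sum]
    rw [e2]
    have e3 : ((starRingEnd ℂ) P * t).re = p2 / n := by
      rw [htdef]
      have : (starRingEnd ℂ) P * (P / ((n : ℝ) : ℂ)) = (((‖P‖ ^ 2 / n : ℝ)) : ℂ) := by
        rw [mul_div_assoc', Complex.conj_mul', Complex.ofReal_div]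
        norm_cast
      rw [this, Complex.ofReal_re, hp2def]
    have e4 : ‖t‖ ^ 2 = p2 / n ^ 2 := by
      have hnn' : ‖((n : ℝ) : ℂ)‖ = n := by
        rw [Complex.norm_real, Real.norm_eq_abs, abs_of_nonneg hn0.le]
      rw [htdef, norm_div, div_pow, hnn', hp2def]
    rw [e3, e4]
    have hcn : ((S.card : ℕ) : ℝ) = n := by rw [hndef]
    rw [hcn]
    have e5 : n * (p2 / n ^ 2) = p2 / n := by
      rw [sq, ← div_div, mul_div_assoc', mul_div_cancel_left₀ _ hn0.ne']
    rw [e5]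
    ring
  have hBp : 0 ≤ B - p2 / n := by
    rw [← hsub]
    exact Finset.sum_nonneg fun _ _ => sq_nonneg _
  have key3 : ‖Q‖ ^ 2 ≤ (B - p2 / n) * A := by
    set xh : EuclideanSpace ℂ {x // x ∈ S} := WithLp.toLp 2 (fun v => h ↑v) with hxh
    set av : EuclideanSpace ℂ {x // x ∈ S} := WithLp.toLp 2 (fun v => ψ ↑v - (starRingEnd ℂ) t) with hav
    have hinner : (inner ℂ av xh : ℂ) = Q := by
      simp only [PiLp.inner_apply, RCLike.inner_apply']
      have e1 : ∀ v : {x // x ∈ S}, (starRingEnd ℂ) (av v) * xh v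
          = (starRingEnd ℂ) (ψ ↑v) * h ↑v - t * h ↑v := by
        intro v
        simp only [hav, hxh, map_sub, Complex.conj_conj]
        ring
      rw [Finset.sum_congr rfl (fun v _ => e1 v), Finset.sum_sub_distrib, ← Finset.mul_sum]
      rw [Finset.sum_coe_sort S (fun v => (starRingEnd ℂ) (ψ v) * h v),
        Finset.sum_coe_sort S (fun v => h v), hmean, mul_zero, sub_zero, hQdef]
    have hnav : ‖av‖ ^ 2 = B - p2 / n := by
      rw [EuclideanSpace.norm_eq, Real.sq_sqrt (Finset.sum_nonneg fun _ _ => sq_nonneg _), ← hsub]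
      exact Finset.sum_coe_sort S (fun v => ‖ψ v - (starRingEnd ℂ) t‖ ^ 2)
    have hnxh : ‖xh‖ ^ 2 = A := by
      rw [EuclideanSpace.norm_eq, Real.sq_sqrt (Finset.sum_nonneg fun _ _ => sq_nonneg _), hAdef]
      exact Finset.sum_coe_sort S (fun v => ‖h v‖ ^ 2)
    have h1 : ‖(inner ℂ av xh : ℂ)‖ ≤ ‖av‖ * ‖xh‖ := norm_inner_le_norm av xh
    have h2 : ‖(inner ℂ av xh : ℂ)‖ ^ 2 ≤ (‖av‖ * ‖xh‖) ^ 2 :=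
      pow_le_pow_left₀ (norm_nonneg _) h1 2
    rw [hinner, mul_pow, hnav, hnxh] at h2
    exact h2
  -- spectral gap
  have hgradeq : gradSqOn w S h = gradSqOn w S f := by
    unfold gradSqOn
    congr 1
    apply Finset.sum_congr rfl
    intro u hu
    apply Finset.sum_congr rfl
    intro v hv
    have : h u - h v = f u - f v := by
      simp only [hhdef, if_pos hu, if_pos hv]; ring
    rw [this]
  set G : ℝ := gradSqOn w S f with hGdef
  have hG : lam1 * A ≤ G := by
    rw [← hgradeq, hAdef]
    exact spectral_gap w S hsymm hnn hconnS hSne lam1 hlam h hmean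
  -- nsq restriction
  have hBnsq : nsq ψ = B := by
    unfold nsq
    exact (Finset.sum_subset (Finset.subset_univ S)
      (fun v _ hv => by rw [hsuppψ v hv]; simp)).symm
  -- final assembly
  have hLHS : ∑ v ∈ S, ‖f v - ip ψ f / ((Real.sqrt ((S.card : ℕ)) : ℂ) * ip ψ φ0)‖ ^ 2
      = A + n * (‖Q‖ ^ 2 / p2) := by
    rw [← hmc, ← key1]
  rw [hLHS, hBnsq, hnormφ]
  set q2 : ℝ := ‖Q‖ ^ 2 with hq2def
  have hq2 : 0 ≤ q2 := sq_nonneg _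
  have goal2 : A + n * (q2 / p2) ≤ n * B * A / p2 := by
    have h1 : n * q2 ≤ n * ((B - p2 / n) * A) :=
      mul_le_mul_of_nonneg_left key3 hn0.le
    have h2 : n * ((B - p2 / n) * A) = n * B * A - p2 * A := by
      field_simp
    have expand : n * B * A / p2 - (A + n * (q2 / p2)) = (n * B * A - p2 * A - n * q2) / p2 := by
      field_simp
      ring
    have pos : 0 ≤ (n * B * A - p2 * A - n * q2) / p2 :=
      div_nonneg (by linarith) hp2.le
    linarith
  have goal3 : n * B * A / p2 ≤ B / (lam1 * (p2 / n)) * G := by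
    have hcoef : 0 ≤ B / (lam1 * (p2 / n)) :=
      div_nonneg hB (mul_nonneg hlam1.le (div_nonneg hp2.le hn0.le))
    have h1 := mul_le_mul_of_nonneg_left hG hcoef
    have e : B / (lam1 * (p2 / n)) * (lam1 * A) = n * B * A / p2 := by
      field_simp
    linarith [e ▸ h1]
  linarith

end Stmt8Aux

/-- Theorem 4.1 (generalized Poincaré inequality): with a disjoint cover `{S_j}`, functions
`ψ_j` supported in `S_j` with `⟨ψ_j, φ_{0,j}⟩ ≠ 0`, samples `⟨ζ_j, f⟩ = ⟨ψ_j,f⟩/(√|S_j|⟨ψ_j,φ_{0,j}⟩)`,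
and `Θ_Ξ = max_j ‖ψ_j‖²/(λ_{1,j}|⟨ψ_j,φ_{0,j}⟩|²)`, one has
`Σ_j Σ_{v∈S_j} |f(v) − ⟨ζ_j,f⟩|² ≤ Θ_Ξ ‖∇f‖²`. -/
theorem stmt8 {V J : Type*} [Fintype V] [DecidableEq V] [Fintype J] [Nonempty J]
    (w : V → V → ℝ)
    (hsymm : ∀ u v, w u v = w v u) (hnn : ∀ u v, 0 ≤ w u v) (hdiag : ∀ v, w v v = 0)
    (hconn : GraphConnected w)
    (S : J → Finset V)
    (hdisj : ∀ i j, i ≠ j → Disjoint (S i) (S j))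
    (hcover : ∀ v : V, ∃ j, v ∈ S j)
    (hconnS : ∀ j, GraphConnectedOn w (S j)) (hcardS : ∀ j, 1 < (S j).card)
    (ψ : J → V → ℂ) (hsupp : ∀ j, ∀ v ∉ S j, ψ j v = 0)
    (φ0 : J → V → ℂ)
    (hφ0 : ∀ j, φ0 j = fun v => if v ∈ S j then ((1 / Real.sqrt ((S j).card) : ℝ) : ℂ) else 0)
    (hnz : ∀ j, ip (ψ j) (φ0 j) ≠ 0)
    (lam1 : J → ℝ) (hlam : ∀ j, IsFirstNonzeroEigOn w (S j) (lam1 j))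
    (f : V → ℂ) :
    ∑ j, ∑ v ∈ S j,
        ‖f v - ip (ψ j) f / ((Real.sqrt ((S j).card) : ℂ) * ip (ψ j) (φ0 j))‖ ^ 2 ≤
      (Finset.univ.sup' Finset.univ_nonempty
          (fun j => nsq (ψ j) / (lam1 j * ‖ip (ψ j) (φ0 j)‖ ^ 2))) * gradSq w f := by
  classical
  set Θ : ℝ := Finset.univ.sup' Finset.univ_nonempty
      (fun j => nsq (ψ j) / (lam1 j * ‖ip (ψ j) (φ0 j)‖ ^ 2)) with hΘ
  have hblock : ∀ j, ∑ v ∈ S j,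
      ‖f v - ip (ψ j) f / ((Real.sqrt ((S j).card) : ℂ) * ip (ψ j) (φ0 j))‖ ^ 2
      ≤ (nsq (ψ j) / (lam1 j * ‖ip (ψ j) (φ0 j)‖ ^ 2)) * gradSqOn w (S j) f :=
    fun j => local_poincare w (S j) hsymm hnn (hconnS j) (hcardS j) (ψ j) (hsupp j)
      (φ0 j) (hφ0 j) (hnz j) (lam1 j) (hlam j) f
  have hΘj : ∀ j, nsq (ψ j) / (lam1 j * ‖ip (ψ j) (φ0 j)‖ ^ 2) ≤ Θ := by
    intro j
    rw [hΘ]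
    exact Finset.le_sup' (fun j => nsq (ψ j) / (lam1 j * ‖ip (ψ j) (φ0 j)‖ ^ 2))
      (Finset.mem_univ j)
  have hnsq : ∀ j, 0 ≤ nsq (ψ j) := by
    intro j
    unfold nsq
    exact Finset.sum_nonneg fun _ _ => sq_nonneg _
  have hΘnn : 0 ≤ Θ := by
    obtain ⟨j⟩ := ‹Nonempty J›
    exact le_trans (div_nonneg (hnsq j) (mul_nonneg (hlam j).1.le (sq_nonneg _))) (hΘj j)
  have hgradOnnn : ∀ j, 0 ≤ gradSqOn w (S j) f := by
    intro j
    unfold gradSqOn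
    exact mul_nonneg (by norm_num)
      (Finset.sum_nonneg fun u _ => Finset.sum_nonneg fun v _ =>
        mul_nonneg (sq_nonneg _) (hnn u v))
  have hgradle : ∑ j, gradSqOn w (S j) f ≤ gradSq w f := by
    unfold gradSqOn gradSq
    rw [← Finset.mul_sum]
    apply mul_le_mul_of_nonneg_left _ (by norm_num)
    have h1 : ∀ j : J, ∑ u ∈ S j, ∑ v ∈ S j, ‖f u - f v‖ ^ 2 * w u v
        ≤ ∑ u ∈ S j, ∑ v, ‖f u - f v‖ ^ 2 * w u v :=
      fun j => Finset.sum_le_sum fun u _ =>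
        Finset.sum_le_sum_of_subset_of_nonneg (Finset.subset_univ _)
          (fun v _ _ => mul_nonneg (sq_nonneg _) (hnn u v))
    have hbU : Finset.univ.biUnion S = (Finset.univ : Finset V) := by
      ext v
      simp only [Finset.mem_biUnion, Finset.mem_univ, true_and, iff_true]
      exact hcover v
    have hpd : (↑(Finset.univ : Finset J) : Set J).PairwiseDisjoint S :=
      fun i _ j _ hij => hdisj i j hij
    calc ∑ j, ∑ u ∈ S j, ∑ v ∈ S j, ‖f u - f v‖ ^ 2 * w u v
        ≤ ∑ j, ∑ u ∈ S j, ∑ v, ‖f u - f v‖ ^ 2 * w u v :=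
          Finset.sum_le_sum fun j _ => h1 j
      _ = ∑ u ∈ Finset.univ.biUnion S, ∑ v, ‖f u - f v‖ ^ 2 * w u v :=
          (Finset.sum_biUnion hpd).symm
      _ = ∑ u, ∑ v, ‖f u - f v‖ ^ 2 * w u v := by rw [hbU]
  calc ∑ j, ∑ v ∈ S j,
        ‖f v - ip (ψ j) f / ((Real.sqrt ((S j).card) : ℂ) * ip (ψ j) (φ0 j))‖ ^ 2
      ≤ ∑ j, Θ * gradSqOn w (S j) f :=
        Finset.sum_le_sum fun j _ => le_trans (hblock j)
          (mul_le_mul_of_nonneg_right (hΘj j) (hgradOnnn j))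
    _ = Θ * ∑ j, gradSqOn w (S j) f := by rw [Finset.mul_sum]
    _ ≤ Θ * gradSq w f := mul_le_mul_of_nonneg_left hgradle hΘnn
end
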